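/- arXiv:1903.01208 — 2 statements merged into one kernel-verified Lean document; each statement's English description precedes it below -/
import Mathlib

section
/- Let A ∈ ℝ^{m×n} be a matrix with unit ℓ²-norm columns a₁,…,aₙ, partitioned into N ≥ 2 blocks via a block-assignment map π : {1,…,n} → {1,…,N}. Suppose μ > 0 is such that |⟨a_j, a_k⟩| ≤ μ for all j ≠ k, and there are constants α_i ∈ [0,1] such that |⟨a_j, a_k⟩| ≤ α_i μ whenever j ≠ k and π(j) = π(k) = i; set α_max = max_i α_i. Then every nonzero vector z ∈ ℝⁿ with Az = 0 satisfies ‖z‖₀ ≥ N(1 + α_max μ)/((N − 1 + α_max)μ); equivalently, spark(A) ≥ N(1 + α_max μ)/((N − 1 + α_max)μ). -/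
/-- The number of nonzero entries of a vector (`‖z‖₀`). -/
noncomputable def l0 {n : ℕ} (z : Fin n → ℝ) : ℕ :=
  (Finset.univ.filter fun j => z j ≠ 0).card

/-- **Lower bound on the spark of a union of general bases.**
If `A` has unit-norm columns partitioned into `N ≥ 2` blocks by `π`, overall coherence
bounded by `μ > 0`, within-block coherence of block `i` bounded by `α i * μ` with
`α i ∈ [0,1]` and `αmax = max_i α i`, then every nonzero `z` with `A z = 0` satisfies
`‖z‖₀ ≥ N (1 + αmax μ) / ((N - 1 + αmax) μ)`, i.e. `spark(A)` is at least this bound. -/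
theorem piecewise_spark_lower_bound {m n N : ℕ} (hN : 2 ≤ N)
    (A : Matrix (Fin m) (Fin n) ℝ) (π : Fin n → Fin N)
    (hunit : ∀ j, ∑ i, A i j * A i j = 1)
    (μ : ℝ) (hμ : 0 < μ)
    (hcoh : ∀ j k, j ≠ k → |∑ i, A i j * A i k| ≤ μ)
    (α : Fin N → ℝ) (hα0 : ∀ i, 0 ≤ α i) (hα1 : ∀ i, α i ≤ 1)
    (hblock : ∀ j k, j ≠ k → π j = π k → |∑ i, A i j * A i k| ≤ α (π j) * μ)
    (αmax : ℝ) (hαmax : IsGreatest (Set.range α) αmax) :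
    ∀ z : Fin n → ℝ, z ≠ 0 → A.mulVec z = 0 →
      (N : ℝ) * (1 + αmax * μ) / (((N : ℝ) - 1 + αmax) * μ) ≤ (l0 z : ℝ) := by
  intro z hz hAz
  -- basic facts about αmax
  obtain ⟨⟨i₀, hi₀⟩, hub⟩ := hαmax
  have hα0' : (0:ℝ) ≤ αmax := hi₀ ▸ hα0 i₀
  have hα1' : αmax ≤ 1 := hi₀ ▸ hα1 i₀
  -- notation
  set G : Fin n → Fin n → ℝ := fun j k => ∑ i, A i j * A i k with hG
  set w : Fin n → ℝ := fun j => |z j| with hw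
  set Q : ℝ := ∑ j, z j ^ 2 with hQ
  set T : ℝ := ∑ j, w j with hT
  set W : Fin N → ℝ := fun i => ∑ j ∈ Finset.univ.filter (fun j => π j = i), w j with hW
  set P : ℝ := ∑ i, W i ^ 2 with hP
  set S : Finset (Fin n) := Finset.univ.filter (fun j => z j ≠ 0) with hS
  have hwnn : ∀ j, 0 ≤ w j := fun j => abs_nonneg _
  have hww : ∀ j, w j * w j = z j ^ 2 := fun j => by
    rw [hw]; simp only []; rw [abs_mul_abs_self]; ring
  have hQpos : 0 < Q := by
    obtain ⟨j, hj⟩ : ∃ j, z j ≠ 0 := by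
      by_contra h
      push_neg at h
      exact hz (funext h)
    have h0 : (0:ℝ) < z j ^ 2 := by positivity
    calc (0:ℝ) < z j ^ 2 := h0
      _ ≤ Q := Finset.single_le_sum (f := fun j => z j ^ 2)
          (fun i _ => sq_nonneg _) (Finset.mem_univ j)
  -- step 2: the quadratic form vanishes
  have hmv : ∀ i, A.mulVec z i = 0 := fun i => congrFun hAz i
  have hG0 : ∑ j, ∑ k, z j * z k * G j k = 0 := by
    calc ∑ j, ∑ k, z j * z k * G j k
        = ∑ j, ∑ i, (A i j * z j) * (A.mulVec z i) := by
          refine Finset.sum_congr rfl fun j _ => ?_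
          calc ∑ k, z j * z k * G j k
              = ∑ k, ∑ i, (A i j * z j) * (A i k * z k) := by
                refine Finset.sum_congr rfl fun k _ => ?_
                rw [hG, Finset.mul_sum]
                exact Finset.sum_congr rfl fun i _ => by ring
            _ = ∑ i, ∑ k, (A i j * z j) * (A i k * z k) := Finset.sum_comm
            _ = ∑ i, (A i j * z j) * ∑ k, A i k * z k := by
                refine Finset.sum_congr rfl fun i _ => (Finset.mul_sum _ _ _).symm
            _ = ∑ i, (A i j * z j) * (A.mulVec z i) := by
                refine Finset.sum_congr rfl fun i _ => ?_
                rw [Matrix.mulVec, dotProduct]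
      _ = 0 := by simp [hmv]
  -- step 3: split off the diagonal
  have hsplit : Q = -∑ j, ∑ k ∈ Finset.univ.erase j, z j * z k * G j k := by
    have h1 : ∀ j : Fin n, ∑ k ∈ Finset.univ.erase j, z j * z k * G j k
        = (∑ k, z j * z k * G j k) - z j ^ 2 := by
      intro j
      rw [Finset.sum_erase_eq_sub (Finset.mem_univ j)]
      have hGd : G j j = 1 := hunit j
      rw [hGd]; ring_nf
    have h2 : ∑ j, ∑ k ∈ Finset.univ.erase j, z j * z k * G j k
        = (∑ j, ∑ k, z j * z k * G j k) - Q := by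
      rw [hQ, ← Finset.sum_sub_distrib]
      exact Finset.sum_congr rfl fun j _ => h1 j
    rw [h2, hG0]; ring
  -- step 4: bound Q by off-diagonal coherence sums
  have hQle : Q ≤ ∑ j, ∑ k ∈ Finset.univ.erase j, w j * w k *
      (if π j = π k then αmax * μ else μ) := by
    rw [hsplit]
    have h2 : -∑ j, ∑ k ∈ Finset.univ.erase j, z j * z k * G j k
        ≤ ∑ j, ∑ k ∈ Finset.univ.erase j, |z j * z k * G j k| := by
      calc -∑ j, ∑ k ∈ Finset.univ.erase j, z j * z k * G j k
          ≤ |∑ j, ∑ k ∈ Finset.univ.erase j, z j * z k * G j k| := neg_le_abs _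
        _ ≤ ∑ j, |∑ k ∈ Finset.univ.erase j, z j * z k * G j k| :=
            Finset.abs_sum_le_sum_abs _ _
        _ ≤ ∑ j, ∑ k ∈ Finset.univ.erase j, |z j * z k * G j k| :=
            Finset.sum_le_sum fun j _ => Finset.abs_sum_le_sum_abs _ _
    refine h2.trans (Finset.sum_le_sum fun j _ => Finset.sum_le_sum fun k hk => ?_)
    have hjk : k ≠ j := Finset.ne_of_mem_erase hk
    rw [abs_mul, abs_mul]
    have hwwn : 0 ≤ |z j| * |z k| := by positivity
    by_cases hpi : π j = π k
    · have hb : |G j k| ≤ α (π j) * μ := hblock j k (Ne.symm hjk) hpi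
      have h3 : |G j k| ≤ αmax * μ :=
        hb.trans (mul_le_mul_of_nonneg_right (hub ⟨π j, rfl⟩) hμ.le)
      rw [if_pos hpi]
      exact mul_le_mul_of_nonneg_left h3 hwwn
    · have h3 : |G j k| ≤ μ := hcoh j k (Ne.symm hjk)
      rw [if_neg hpi]
      exact mul_le_mul_of_nonneg_left h3 hwwn
  -- step 5: compute the bounding sum
  have hsame : ∑ j, ∑ k, (if π j = π k then w j * w k else 0) = P := by
    have h4 : ∀ j, ∑ k, (if π j = π k then w j * w k else 0) = w j * W (π j) := by
      intro j
      rw [hW]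
      simp only []
      rw [Finset.mul_sum, Finset.sum_filter]
      refine Finset.sum_congr rfl fun k _ => ?_
      by_cases h : π j = π k
      · rw [if_pos h, if_pos h.symm]
      · rw [if_neg h, if_neg (fun hh => h hh.symm)]
    calc ∑ j, ∑ k, (if π j = π k then w j * w k else 0)
        = ∑ j, w j * W (π j) := Finset.sum_congr rfl fun j _ => h4 j
      _ = ∑ i, ∑ j ∈ Finset.univ.filter (fun j => π j = i), w j * W (π j) :=
          (Finset.sum_fiberwise _ _ _).symm
      _ = ∑ i, ∑ j ∈ Finset.univ.filter (fun j => π j = i), w j * W i := by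
          refine Finset.sum_congr rfl fun i _ => Finset.sum_congr rfl fun j hj => ?_
          rw [(Finset.mem_filter.mp hj).2]
      _ = P := by
          rw [hP]
          refine Finset.sum_congr rfl fun i _ => ?_
          rw [← Finset.sum_mul, hW, sq]
  have hfull : ∑ j, ∑ k, w j * w k * (if π j = π k then αmax * μ else μ)
      = μ * T ^ 2 + (αmax - 1) * μ * P := by
    have h5 : ∀ j k, w j * w k * (if π j = π k then αmax * μ else μ)
        = μ * (w j * w k) + (αmax - 1) * μ * (if π j = π k then w j * w k else 0) := by
      intro j k
      by_cases h : π j = π k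
      · rw [if_pos h, if_pos h]; ring
      · rw [if_neg h, if_neg h]; ring
    calc ∑ j, ∑ k, w j * w k * (if π j = π k then αmax * μ else μ)
        = ∑ j, ∑ k, (μ * (w j * w k)
            + (αmax - 1) * μ * (if π j = π k then w j * w k else 0)) :=
          Finset.sum_congr rfl fun j _ => Finset.sum_congr rfl fun k _ => h5 j k
      _ = μ * (∑ j, ∑ k, w j * w k)
            + (αmax - 1) * μ * ∑ j, ∑ k, (if π j = π k then w j * w k else 0) := by
          simp only [Finset.sum_add_distrib, Finset.mul_sum]
      _ = μ * T ^ 2 + (αmax - 1) * μ * P := by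
          rw [hsame]
          congr 1
          rw [hT, sq, Finset.sum_mul_sum]
  have herase : ∑ j, ∑ k ∈ Finset.univ.erase j, w j * w k *
      (if π j = π k then αmax * μ else μ)
      = μ * T ^ 2 + (αmax - 1) * μ * P - αmax * μ * Q := by
    have h6 : ∀ j : Fin n,
        ∑ k ∈ Finset.univ.erase j, w j * w k * (if π j = π k then αmax * μ else μ)
        = (∑ k, w j * w k * (if π j = π k then αmax * μ else μ)) - αmax * μ * z j ^ 2 := by
      intro j
      rw [Finset.sum_erase_eq_sub (Finset.mem_univ j), if_pos rfl, hww j]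
      ring_nf
    calc ∑ j, ∑ k ∈ Finset.univ.erase j, w j * w k * (if π j = π k then αmax * μ else μ)
        = ∑ j, ((∑ k, w j * w k * (if π j = π k then αmax * μ else μ))
            - αmax * μ * z j ^ 2) := Finset.sum_congr rfl fun j _ => h6 j
      _ = (∑ j, ∑ k, w j * w k * (if π j = π k then αmax * μ else μ)) - αmax * μ * Q := by
          rw [Finset.sum_sub_distrib, hQ, Finset.mul_sum]
      _ = μ * T ^ 2 + (αmax - 1) * μ * P - αmax * μ * Q := by rw [hfull]
  -- main inequality: Q (1 + αmax μ) ≤ μ T² - (1 - αmax) μ P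
  have hmain : Q * (1 + αmax * μ) ≤ μ * T ^ 2 - (1 - αmax) * μ * P := by
    have h7 := hQle
    rw [herase] at h7
    linarith [h7]
  -- step 6: Cauchy-Schwarz over blocks
  have hTW : T = ∑ i, W i := by
    rw [hT, hW]
    exact (Finset.sum_fiberwise _ _ _).symm
  have hP1 : T ^ 2 ≤ N * P := by
    rw [hTW, hP]
    have := sq_sum_le_card_mul_sum_sq (s := (Finset.univ : Finset (Fin N))) (f := W)
    simpa using this
  have hPnn : 0 ≤ P := by
    rw [hP]; exact Finset.sum_nonneg fun i _ => sq_nonneg _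
  -- step 7: Cauchy-Schwarz over the support
  have hsQ : T ^ 2 ≤ (l0 z : ℝ) * Q := by
    have hTS : T = ∑ j ∈ S, w j := by
      rw [hT, hS, Finset.sum_filter]
      refine Finset.sum_congr rfl fun j _ => ?_
      by_cases h : z j = 0
      · simp [hw, h]
      · simp [h]
    have hQS : ∑ j ∈ S, w j ^ 2 ≤ Q := by
      calc ∑ j ∈ S, w j ^ 2 = ∑ j ∈ S, z j ^ 2 :=
            Finset.sum_congr rfl fun j _ => by rw [hw]; exact sq_abs _
        _ ≤ Q := by
            rw [hQ, hS]
            exact Finset.sum_le_sum_of_subset_of_nonneg (Finset.filter_subset _ _)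
              (fun i _ _ => sq_nonneg _)
    calc T ^ 2 = (∑ j ∈ S, w j) ^ 2 := by rw [hTS]
      _ ≤ S.card * ∑ j ∈ S, w j ^ 2 := sq_sum_le_card_mul_sum_sq
      _ ≤ (l0 z : ℝ) * Q := by
          rw [l0, ← hS]
          exact mul_le_mul_of_nonneg_left hQS (Nat.cast_nonneg _)
  -- combine everything
  have hNpos : (0:ℝ) < N := by positivity
  have hN1 : (1:ℝ) ≤ (N:ℝ) - 1 := by
    have h9 : (2:ℝ) ≤ (N:ℝ) := by exact_mod_cast hN
    linarith
  have hdenpos : 0 < ((N:ℝ) - 1 + αmax) * μ := by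
    apply mul_pos _ hμ
    linarith
  have hkey : Q * (1 + αmax * μ) * N ≤ μ * T ^ 2 * ((N:ℝ) - 1 + αmax) := by
    nlinarith [mul_le_mul_of_nonneg_right hmain hNpos.le,
      mul_nonneg (mul_nonneg (sub_nonneg.mpr hα1') hμ.le) (sub_nonneg.mpr hP1)]
  have hfinal : Q * (1 + αmax * μ) * N ≤ μ * ((l0 z : ℝ) * Q) * ((N:ℝ) - 1 + αmax) := by
    refine hkey.trans ?_
    have h10 : (0:ℝ) ≤ μ * ((N:ℝ) - 1 + αmax) := mul_nonneg hμ.le (by linarith)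
    nlinarith [mul_le_mul_of_nonneg_right hsQ h10]
  rw [div_le_iff₀ hdenpos]
  have h8 : (1 + αmax * μ) * N ≤ μ * (l0 z : ℝ) * ((N:ℝ) - 1 + αmax) := by
    have h9 : ((1 + αmax * μ) * N) * Q ≤ (μ * (l0 z : ℝ) * ((N:ℝ) - 1 + αmax)) * Q := by
      linarith [hfinal]
    exact le_of_mul_le_mul_right h9 hQpos
  linarith [h8]
end

section
/- Let A ∈ ℝ^{m×n} have unit ℓ²-norm columns a₁,…,aₙ and suppose μ > 0 satisfies |⟨a_j, a_k⟩| ≤ μ for all j ≠ k. Then every nonzero vector z ∈ ℝⁿ with Az = 0 satisfies ‖z‖₀ ≥ 1 + 1/μ; equivalently, spark(A) ≥ 1 + 1/μ, so any set of s columns of A with (s − 1)μ < 1 is linearly independent. -/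
lemma spark_aux {m n : ℕ} (A : Matrix (Fin m) (Fin n) ℝ)
    (hunit : ∀ j, ∑ i, A i j * A i j = 1)
    (μ : ℝ) (hμ : 0 < μ)
    (hcoh : ∀ j k, j ≠ k → |∑ i, A i j * A i k| ≤ μ)
    (z : Fin n → ℝ) (hz : z ≠ 0) (hAz : A.mulVec z = 0) :
    1 + 1 / μ ≤ (l0 z : ℝ) := by
  obtain ⟨j0, hj0⟩ := Function.ne_iff.mp hz
  have hne : (Finset.univ : Finset (Fin n)).Nonempty := ⟨j0, Finset.mem_univ _⟩
  obtain ⟨j, -, hj⟩ := Finset.exists_max_image Finset.univ (fun k => |z k|) hne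
  have hzj : 0 < |z j| := lt_of_lt_of_le (abs_pos.mpr hj0) (hj j0 (Finset.mem_univ _))
  have hzjne : z j ≠ 0 := fun h => by simp [h] at hzj
  set S := Finset.univ.filter fun k => z k ≠ 0 with hS
  have hjS : j ∈ S := by simp [hS, hzjne]
  -- key identity
  have hsum : ∑ k, (∑ i, A i j * A i k) * z k = 0 := by
    calc ∑ k, (∑ i, A i j * A i k) * z k
        = ∑ i, A i j * (A.mulVec z i) := by
          simp only [Matrix.mulVec, dotProduct, Finset.sum_mul, Finset.mul_sum]
          rw [Finset.sum_comm]
          exact Finset.sum_congr rfl fun a _ => Finset.sum_congr rfl fun b _ => by ring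
      _ = 0 := by simp [hAz]
  have hsplit : (∑ i, A i j * A i j) * z j
      + ∑ k ∈ Finset.univ.erase j, (∑ i, A i j * A i k) * z k = 0 := by
    rw [← Finset.add_sum_erase _ _ (Finset.mem_univ j)] at hsum
    exact hsum
  rw [hunit j, one_mul] at hsplit
  have hzj_eq : z j = -∑ k ∈ Finset.univ.erase j, (∑ i, A i j * A i k) * z k := by
    linarith
  -- bound
  have hbound : |z j| ≤ μ * ((S.card : ℝ) - 1) * |z j| := by
    have h1 : |z j| ≤ ∑ k ∈ Finset.univ.erase j, |(∑ i, A i j * A i k) * z k| := by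
      rw [hzj_eq, abs_neg]
      exact Finset.abs_sum_le_sum_abs _ _
    have h2 : ∑ k ∈ Finset.univ.erase j, |(∑ i, A i j * A i k) * z k|
        = ∑ k ∈ S.erase j, |(∑ i, A i j * A i k) * z k| := by
      refine (Finset.sum_subset ?_ ?_).symm
      · intro k hk
        simp only [Finset.mem_erase, hS, Finset.mem_filter] at hk ⊢
        exact ⟨hk.1, Finset.mem_univ k⟩
      · intro k hk hnk
        have hkj : k ≠ j := (Finset.mem_erase.mp hk).1
        have hzk : z k = 0 := by
          by_contra h
          exact hnk (Finset.mem_erase.mpr ⟨hkj, by simp [hS, h]⟩)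
        rw [hzk, mul_zero, abs_zero]
    have h3 : ∑ k ∈ S.erase j, |(∑ i, A i j * A i k) * z k|
        ≤ ∑ k ∈ S.erase j, μ * |z j| := by
      refine Finset.sum_le_sum fun k hk => ?_
      have hkj : k ≠ j := (Finset.mem_erase.mp hk).1
      rw [abs_mul]
      exact mul_le_mul (hcoh j k (Ne.symm hkj)) (hj k (Finset.mem_univ _))
        (abs_nonneg _) hμ.le
    have h4 : ∑ k ∈ S.erase j, μ * |z j| = ((S.card : ℝ) - 1) * (μ * |z j|) := by
      rw [Finset.sum_const, nsmul_eq_mul, Finset.card_erase_of_mem hjS]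
      have : 1 ≤ S.card := Finset.card_pos.mpr ⟨j, hjS⟩
      push_cast [this]
      ring
    calc |z j| ≤ ∑ k ∈ Finset.univ.erase j, |(∑ i, A i j * A i k) * z k| := h1
      _ = ∑ k ∈ S.erase j, |(∑ i, A i j * A i k) * z k| := h2
      _ ≤ ∑ k ∈ S.erase j, μ * |z j| := h3
      _ = μ * ((S.card : ℝ) - 1) * |z j| := by rw [h4]; ring
  have h5 : 1 ≤ μ * ((S.card : ℝ) - 1) := by
    have := le_of_mul_le_mul_right (by linarith [hbound] : 1 * |z j| ≤ μ * ((S.card : ℝ) - 1) * |z j|) hzj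
    linarith
  have h6 : 1 / μ ≤ (S.card : ℝ) - 1 := by
    rw [div_le_iff₀ hμ]
    linarith [mul_comm μ ((S.card : ℝ) - 1)]
  have : l0 z = S.card := rfl
  rw [this]
  linarith

/-- **Coherence-based lower bound on the spark: `spark(A) ≥ 1 + 1/μ`.**
If `A` has unit-norm columns with mutual coherence bounded by `μ > 0`, then every nonzero
`z` with `A z = 0` satisfies `‖z‖₀ ≥ 1 + 1/μ`; consequently, any set `S` of columns of
`A` with `(|S| − 1) μ < 1` is linearly independent. -/
theorem coherence_spark_lower_bound {m n : ℕ}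
    (A : Matrix (Fin m) (Fin n) ℝ)
    (hunit : ∀ j, ∑ i, A i j * A i j = 1)
    (μ : ℝ) (hμ : 0 < μ)
    (hcoh : ∀ j k, j ≠ k → |∑ i, A i j * A i k| ≤ μ) :
    (∀ z : Fin n → ℝ, z ≠ 0 → A.mulVec z = 0 → 1 + 1 / μ ≤ (l0 z : ℝ)) ∧
      ∀ S : Finset (Fin n), ((S.card : ℝ) - 1) * μ < 1 →
        LinearIndependent ℝ (fun j : ↥S => fun i => A i (j : Fin n)) := by
  refine ⟨spark_aux A hunit μ hμ hcoh, fun S hSμ => ?_⟩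
  rw [Fintype.linearIndependent_iff]
  intro g hg
  by_contra hcon
  push_neg at hcon
  obtain ⟨j1, hj1⟩ := hcon
  set z : Fin n → ℝ := fun k => if h : k ∈ S then g ⟨k, h⟩ else 0 with hzdef
  have hzne : z ≠ 0 := by
    intro h
    apply hj1
    have := congrFun h (j1 : Fin n)
    simpa [hzdef, j1.2] using this
  have hAz : A.mulVec z = 0 := by
    funext i
    have := congrFun hg i
    simp only [Finset.sum_apply, Pi.smul_apply, smul_eq_mul, Pi.zero_apply] at this
    simp only [Matrix.mulVec, dotProduct, Pi.zero_apply]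
    rw [← this]
    have h1 : ∑ x : Fin n, A i x * z x = ∑ k ∈ S, A i k * z k :=
      (Finset.sum_subset (Finset.subset_univ S) (fun k _ hk => by simp [hzdef, hk])).symm
    rw [h1, ← Finset.sum_attach S (fun k => A i k * z k)]
    refine Finset.sum_congr rfl fun k _ => ?_
    simp [hzdef, k.2, mul_comm]
  have hle := spark_aux A hunit μ hμ hcoh z hzne hAz
  have hcard : (l0 z : ℝ) ≤ (S.card : ℝ) := by
    have : (Finset.univ.filter fun k => z k ≠ 0) ⊆ S := by
      intro k hk
      simp only [Finset.mem_filter] at hk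
      by_contra hknS
      exact hk.2 (by simp [hzdef, hknS])
    exact_mod_cast Finset.card_le_card this
  have h1 : 1 / μ ≤ (S.card : ℝ) - 1 := by linarith
  have h2 : 1 ≤ ((S.card : ℝ) - 1) * μ := by
    rw [div_le_iff₀ hμ] at h1
    linarith
  linarith
end
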